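/- arXiv:1404.0357 — 4 statements merged into one kernel-verified Lean document; each statement's English description precedes it below -/
import Mathlib

section
/- For every X ∈ L⁰ and every ε ∈ L⁰₊₊, the element 0 is a greatest lower bound (in the a.e. order on L⁰) of the set {Y ∈ L⁰₊ : X ∈ Y·U_ε}, where U_ε := {Y ∈ L⁰ : ∃ finite I ⊆ ℕ such that |Y·1_{A_i}| ≤ ε a.e. for all i ∉ I}; i.e., the gauge function p_{U_ε} vanishes identically on L⁰. -/
open MeasureTheory Filter Pointwise

variable {Ω : Type*} [MeasurableSpace Ω] (P : MeasureTheory.Measure Ω ) [IsProbabilityMeasure P]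

noncomputable instance : CommRing (Ω →ₘ[P] ℝ) :=
  { (inferInstance : AddCommGroup (Ω →ₘ[P] ℝ)),
    (inferInstance : CommMonoid (Ω →ₘ[P] ℝ)) with
    left_distrib := fun f g h => AEEqFun.ext (by
      filter_upwards [AEEqFun.coeFn_mul f (g + h), AEEqFun.coeFn_add g h,
        AEEqFun.coeFn_add (f * g) (f * h), AEEqFun.coeFn_mul f g, AEEqFun.coeFn_mul f h]
        with ω h1 h2 h3 h4 h5
      simp only [Pi.mul_apply, Pi.add_apply] at *
      rw [h1, h2, h3, h4, h5, mul_add])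
    right_distrib := fun f g h => AEEqFun.ext (by
      filter_upwards [AEEqFun.coeFn_mul (f + g) h, AEEqFun.coeFn_add f g,
        AEEqFun.coeFn_add (f * h) (g * h), AEEqFun.coeFn_mul f h, AEEqFun.coeFn_mul g h]
        with ω h1 h2 h3 h4 h5
      simp only [Pi.mul_apply, Pi.add_apply] at *
      rw [h1, h2, h3, h4, h5, add_mul])
    zero_mul := fun f => AEEqFun.ext (by
      filter_upwards [AEEqFun.coeFn_mul 0 f, AEEqFun.coeFn_zero (β := ℝ) (μ := P)]
        with ω h1 h2
      simp only [Pi.mul_apply, Pi.zero_apply] at *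
      rw [h1, h2, zero_mul])
    mul_zero := fun f => AEEqFun.ext (by
      filter_upwards [AEEqFun.coeFn_mul f 0, AEEqFun.coeFn_zero (β := ℝ) (μ := P)]
        with ω h1 h2
      simp only [Pi.mul_apply, Pi.zero_apply] at *
      rw [h1, h2, mul_zero]) }

/-- `L⁰₊₊`: the set of a.e. strictly positive elements. -/
def L0pp (Y : Ω →ₘ[P] ℝ) : Prop := ∀ᵐ ω ∂P, 0 < Y ω

/-- The equivalence class of the indicator function of a measurable set. -/
noncomputable def ind (A : Set Ω) (hA : MeasurableSet A) : Ω →ₘ[P] ℝ :=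
  AEEqFun.mk (A.indicator fun _ => (1 : ℝ)) (aestronglyMeasurable_const.indicator hA)

section ModuleDefs

variable {E : Type*} [AddCommGroup E] [Module (Ω →ₘ[P] ℝ) E]

/-- `L⁰`-convexity of a subset of an `L⁰`-module. -/
def IsL0Convex (U : Set E) : Prop :=
  ∀ X₁ ∈ U, ∀ X₂ ∈ U, ∀ Y : Ω →ₘ[P] ℝ, 0 ≤ Y → Y ≤ 1 → Y • X₁ + (1 - Y) • X₂ ∈ U

/-- `L⁰`-absorbency of a subset of an `L⁰`-module. -/
def IsL0Absorbent (U : Set E) : Prop :=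
  ∀ X : E, ∃ Y : Ω →ₘ[P] ℝ, L0pp P Y ∧ X ∈ Y • U

/-- `L⁰`-balancedness of a subset of an `L⁰`-module. -/
def IsL0Balanced (U : Set E) : Prop :=
  ∀ X ∈ U, ∀ Y : Ω →ₘ[P] ℝ, |Y| ≤ 1 → Y • X ∈ U

/-- Closedness under countable concatenations. -/
def IsConcatClosed (C : Set E) : Prop :=
  ∀ (A : ℕ → Set Ω) (hA : ∀ n, MeasurableSet (A n)),
    Pairwise (Function.onFun Disjoint A) → (⋃ n, A n) = Set.univ →
    ∀ X : E, (∀ n, ∃ Xn ∈ C, ind P (A n) (hA n) • X = ind P (A n) (hA n) • Xn) → X ∈ C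

/-- `L⁰`-seminorm. -/
def IsL0Seminorm (p : E → (Ω →ₘ[P] ℝ)) : Prop :=
  (∀ X : E, 0 ≤ p X) ∧ (∀ (Y : Ω →ₘ[P] ℝ) (X : E), p (Y • X) = |Y| * p X) ∧
    (∀ X₁ X₂ : E, p (X₁ + X₂) ≤ p X₁ + p X₂)

/-- The set whose essential infimum is the gauge `p_K(X)`. -/
def gaugeSet (K : Set E) (X : E) : Set (Ω →ₘ[P] ℝ) :=
  {Y : Ω →ₘ[P] ℝ | 0 ≤ Y ∧ X ∈ Y • K}

end ModuleDefs

/-- The set `U_ε` of the counterexample: `Y ∈ U_ε` iff `|Y·1_{A_i}| ≤ ε` a.e. for all `i`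
outside some finite set `I ⊆ ℕ`. -/
def Uset (A : ℕ → Set Ω) (hA : ∀ n, MeasurableSet (A n)) (ε : Ω →ₘ[P] ℝ) :
    Set (Ω →ₘ[P] ℝ) :=
  {Y : Ω →ₘ[P] ℝ | ∃ I : Finset ℕ, ∀ i ∉ I, |Y * ind P (A i) (hA i)| ≤ ε}

/-- the gauge of `U_ε` vanishes identically: `0` is a greatest lower
bound of `{Y ∈ L⁰₊ : X ∈ Y·U_ε}` for every `X ∈ L⁰`. -/
theorem stmt_14 {Ω : Type*} [MeasurableSpace Ω] (P : MeasureTheory.Measure Ω)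
    [IsProbabilityMeasure P]
    (A : ℕ → Set Ω) (hA : ∀ n, MeasurableSet (A n))
    (hdisj : Pairwise (Function.onFun Disjoint A)) (hcover : (⋃ n, A n) = Set.univ)
    (hpos : ∀ n, 0 < P (A n))
    (X : Ω →ₘ[P] ℝ) (ε : Ω →ₘ[P] ℝ) (hε : L0pp P ε) :
    IsGLB (gaugeSet P (Uset P A hA ε) X) 0 := by
  
  classical
  -- representatives
  set C : ℕ → Set Ω := fun n => ⋃ i ∈ Finset.range (n+1), A i with hC
  have hCmeas : ∀ n, MeasurableSet (C n) := fun n =>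
    Finset.measurableSet_biUnion _ (fun i _ => hA i)
  -- the functions Y_n
  set g : ℕ → Ω → ℝ := fun n ω =>
    if ω ∈ C n then ((n:ℝ)+1)⁻¹ else |X ω| / ε ω + 1 with hg
  have hgm : ∀ n, Measurable (g n) := by
    intro n
    exact Measurable.ite (hCmeas n) measurable_const
      ((X.measurable.abs.div ε.measurable).add measurable_const)
  set Yn : ℕ → (Ω →ₘ[P] ℝ) := fun n =>
    AEEqFun.mk (g n) (hgm n).aestronglyMeasurable with hYn
  have hεpos : ∀ᵐ ω ∂P, 0 < ε ω := hε
  -- a.e. properties of g n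
  have hgpos : ∀ n, ∀ᵐ ω ∂P, 0 < g n ω := by
    intro n
    filter_upwards [hεpos] with ω hω
    by_cases h : ω ∈ C n
    · simp only [hg, if_pos h]
      positivity
    · simp only [hg, if_neg h]
      have : 0 ≤ |X ω| / ε ω := div_nonneg (abs_nonneg _) hω.le
      linarith
  -- Y_n ∈ gaugeSet
  have hmem : ∀ n, Yn n ∈ gaugeSet P (Uset P A hA ε) X := by
    intro n
    constructor
    · rw [← AEEqFun.coeFn_le]
      filter_upwards [hgpos n, AEEqFun.coeFn_mk (g n) (hgm n).aestronglyMeasurable,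
        AEEqFun.coeFn_zero (β := ℝ) (μ := P)] with ω h1 h2 h3
      rw [h2, h3]; exact h1.le
    · -- X = Yn n • Z with Z = X / g n
      have hZm : Measurable (fun ω => X ω / g n ω) := X.measurable.div (hgm n)
      refine ⟨AEEqFun.mk (fun ω => X ω / g n ω) hZm.aestronglyMeasurable, ?_, ?_⟩
      · refine ⟨Finset.range (n+1), fun i hi => ?_⟩
        rw [← AEEqFun.coeFn_le]
        filter_upwards [hεpos,
          AEEqFun.coeFn_abs (AEEqFun.mk (fun ω => X ω / g n ω) hZm.aestronglyMeasurable
            * ind P (A i) (hA i)),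
          AEEqFun.coeFn_mul (AEEqFun.mk (fun ω => X ω / g n ω) hZm.aestronglyMeasurable)
            (ind P (A i) (hA i)),
          AEEqFun.coeFn_mk (fun ω => X ω / g n ω) hZm.aestronglyMeasurable,
          AEEqFun.coeFn_mk ((A i).indicator fun _ => (1:ℝ))
            (aestronglyMeasurable_const.indicator (hA i))] with ω hεω h1 h2 h3 h4
        rw [h1, h2]
        simp only [Pi.mul_apply]
        rw [h3]
        have h4' : (ind P (A i) (hA i)) ω = (A i).indicator (fun _ => (1:ℝ)) ω := h4
        rw [h4']
        by_cases hωA : ω ∈ A i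
        · have hnotC : ω ∉ C n := by
            simp only [hC, Set.mem_iUnion]
            rintro ⟨j, hj, hωj⟩
            have hji : j ≠ i := by
              rintro rfl; exact hi hj
            exact (hdisj hji).le_bot ⟨hωj, hωA⟩ 
          rw [Set.indicator_of_mem hωA, mul_one]
          simp only [hg, if_neg hnotC]
          rw [abs_div, abs_of_pos (by positivity : (0:ℝ) < |X ω| / ε ω + 1)]
          rw [div_le_iff₀ (by positivity)]
          have : |X ω| / ε ω * ε ω = |X ω| := div_mul_cancel₀ _ (ne_of_gt hεω)
          nlinarith [abs_nonneg (X ω)]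
        · rw [Set.indicator_of_notMem hωA, mul_zero, abs_zero]
          exact hεω.le
      · -- Yn n • Z = X
        show Yn n * _ = X
        apply AEEqFun.ext
        filter_upwards [hgpos n,
          AEEqFun.coeFn_mul (Yn n) (AEEqFun.mk (fun ω => X ω / g n ω) hZm.aestronglyMeasurable),
          AEEqFun.coeFn_mk (g n) (hgm n).aestronglyMeasurable,
          AEEqFun.coeFn_mk (fun ω => X ω / g n ω) hZm.aestronglyMeasurable]
          with ω h0 h1 h2 h3
        rw [h1]
        simp only [Pi.mul_apply]
        rw [h2, h3]
        field_simp
  constructor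
  · -- lower bound
    rintro Y ⟨hY0, -⟩
    exact hY0
  · -- greatest
    rintro b hb
    have hble : ∀ n, b ≤ Yn n := fun n => hb (hmem n)
    rw [← AEEqFun.coeFn_le]
    have hcov : ∀ᵐ ω ∂P, ω ∈ ⋃ n, A n := by
      rw [hcover]; filter_upwards with ω; trivial
    have hall : ∀ᵐ ω ∂P, ∀ n, b ω ≤ g n ω := by
      rw [MeasureTheory.ae_all_iff]
      intro n
      have := (AEEqFun.coeFn_le).mpr (hble n)
      filter_upwards [this, AEEqFun.coeFn_mk (g n) (hgm n).aestronglyMeasurable] with ω h1 h2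
      rw [← h2]; exact h1
    filter_upwards [hcov, hall, AEEqFun.coeFn_zero (β := ℝ) (μ := P)] with ω hω h1 h2
    rw [h2]
    obtain ⟨i, hi⟩ := Set.mem_iUnion.mp hω
    have key : ∀ n ≥ i, b ω ≤ 1/((n:ℝ)+1) := by
      intro n hn
      have hωC : ω ∈ C n := by
        simp only [hC, Set.mem_iUnion]
        exact ⟨i, Finset.mem_range.mpr (Nat.lt_succ_of_le hn), hi⟩
      rw [one_div]
      have := h1 n
      simpa only [hg, if_pos hωC] using this
    have htend : Filter.Tendsto (fun n : ℕ => 1/((n:ℝ)+1)) Filter.atTop (nhds 0) :=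
      tendsto_one_div_add_atTop_nhds_zero_nat
    exact ge_of_tendsto htend (Filter.eventually_atTop.mpr ⟨i, key⟩)
end

section
/- There exist an L⁰-convex, L⁰-absorbent and L⁰-balanced subset U of the L⁰-module L⁰ and an element X ∈ L⁰ such that 0 is a greatest lower bound (a.e. order) of {Y ∈ L⁰₊ : X ∈ Y·U} — so that p_U(X) = 0 < 1 — and yet X ∉ U. In particular the inclusion {X ∈ L⁰ : p_U(X) < 1} ⊆ U fails for some L⁰-convex, L⁰-absorbent, L⁰-balanced U (disproving Theorem 2.4 of Filipovic–Kupper–Vogelpoth). -/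
open MeasureTheory Filter Pointwise

variable {Ω : Type*} [MeasurableSpace Ω] (P : MeasureTheory.Measure Ω ) [IsProbabilityMeasure P]

section CounterexampleAux

open MeasureTheory Filter Pointwise

variable {Ω' : Type*} [MeasurableSpace Ω'] {A : ℕ → Set Ω'}

/-- The index of the (unique) set of the partition containing `ω`. -/
noncomputable def idxOf (hcover : (⋃ n, A n) = Set.univ) (ω : Ω') : ℕ :=
  @Nat.find (fun n => ω ∈ A n) (Classical.decPred _)
    (Set.mem_iUnion.mp (hcover ▸ Set.mem_univ ω))

lemma mem_idxOf (hcover : (⋃ n, A n) = Set.univ) (ω : Ω') : ω ∈ A (idxOf hcover ω) :=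
  @Nat.find_spec (fun n => ω ∈ A n) (Classical.decPred _) _

lemma idxOf_eq (hdisj : Pairwise (Function.onFun Disjoint A))
    (hcover : (⋃ n, A n) = Set.univ) {ω : Ω'} {n : ℕ} (hω : ω ∈ A n) :
    idxOf hcover ω = n := by
  by_contra hne
  exact Set.disjoint_left.mp (hdisj hne) (mem_idxOf hcover ω) hω

lemma measurable_idxOf (hA : ∀ n, MeasurableSet (A n))
    (hdisj : Pairwise (Function.onFun Disjoint A)) (hcover : (⋃ n, A n) = Set.univ) :
    Measurable (idxOf hcover) := by
  apply measurable_to_countable'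
  intro n
  have h : idxOf hcover ⁻¹' {n} = A n := by
    ext ω
    constructor
    · intro hω
      have : idxOf hcover ω = n := hω
      exact this ▸ mem_idxOf hcover ω
    · intro hω
      exact idxOf_eq hdisj hcover hω
  rw [h]; exact hA n

end CounterexampleAux

section CounterexampleAux2

open MeasureTheory Filter Pointwise

variable {Ω' : Type*} [MeasurableSpace Ω'] {A : ℕ → Set Ω'}

/-- The element of `L⁰` with value `c n` on `A n`. -/
noncomputable def mkc (P : MeasureTheory.Measure Ω') (hA : ∀ n, MeasurableSet (A n))
    (hdisj : Pairwise (Function.onFun Disjoint A)) (hcover : (⋃ n, A n) = Set.univ)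
    (c : ℕ → ℝ) : Ω' →ₘ[P] ℝ :=
  AEEqFun.mk (fun ω => c (idxOf hcover ω))
    ((measurable_from_top.comp (measurable_idxOf hA hdisj hcover)).aestronglyMeasurable)

lemma coeFn_mkc (P : MeasureTheory.Measure Ω') (hA : ∀ n, MeasurableSet (A n))
    (hdisj : Pairwise (Function.onFun Disjoint A)) (hcover : (⋃ n, A n) = Set.univ)
    (c : ℕ → ℝ) :
    (mkc P hA hdisj hcover c : Ω' → ℝ) =ᵐ[P] fun ω => c (idxOf hcover ω) :=
  AEEqFun.coeFn_mk _ _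

lemma ind_eval (hdisj : Pairwise (Function.onFun Disjoint A))
    (hcover : (⋃ n, A n) = Set.univ) (i : ℕ) (ω : Ω') :
    (A i).indicator (fun _ => (1:ℝ)) ω = if idxOf hcover ω = i then 1 else 0 := by
  by_cases h : ω ∈ A i
  · rw [Set.indicator_of_mem h, if_pos (idxOf_eq hdisj hcover h)]
  · rw [Set.indicator_of_notMem h, if_neg (fun he => h (by rw [← he]; exact mem_idxOf hcover ω))]

lemma abs_le_one_iff {P : MeasureTheory.Measure Ω'} (f : Ω' →ₘ[P] ℝ) :
    |f| ≤ 1 ↔ ∀ᵐ ω ∂P, |f ω| ≤ 1 := by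
  rw [← AEEqFun.coeFn_le]
  constructor
  · intro h
    filter_upwards [h, AEEqFun.coeFn_abs f, AEEqFun.coeFn_one (β := ℝ) (μ := P)]
      with ω h1 h2 h3
    rw [h2] at h1
    rw [h3] at h1
    simpa using h1
  · intro h
    filter_upwards [h, AEEqFun.coeFn_abs f, AEEqFun.coeFn_one (β := ℝ) (μ := P)]
      with ω h1 h2 h3
    rw [h2, h3]
    simpa using h1

lemma abs_mul_le_one_iff {P : MeasureTheory.Measure Ω'} (f g : Ω' →ₘ[P] ℝ) :
    |f * g| ≤ 1 ↔ ∀ᵐ ω ∂P, |f ω * g ω| ≤ 1 := by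
  rw [abs_le_one_iff]
  constructor
  · intro h
    filter_upwards [h, AEEqFun.coeFn_mul f g] with ω h1 h2
    simp only [Pi.mul_apply] at h2
    rw [← h2]; exact h1
  · intro h
    filter_upwards [h, AEEqFun.coeFn_mul f g] with ω h1 h2
    simp only [Pi.mul_apply] at h2
    rw [h2]; exact h1

lemma le_iff_ae {P : MeasureTheory.Measure Ω'} (f g : Ω' →ₘ[P] ℝ) :
    f ≤ g ↔ (f : Ω' → ℝ) ≤ᵐ[P] g := AEEqFun.coeFn_le.symm

end CounterexampleAux2


/-- there is an `L⁰`-convex, `L⁰`-absorbent, `L⁰`-balanced set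
`U ⊆ L⁰` and `X ∈ L⁰` with `p_U(X) = 0 < 1` but `X ∉ U`; so
`{X : p_U(X) < 1} ⊆ U` fails in general. -/
theorem stmt_15 {Ω : Type*} [MeasurableSpace Ω] (P : MeasureTheory.Measure Ω)
    [IsProbabilityMeasure P]
    (A : ℕ → Set Ω) (hA : ∀ n, MeasurableSet (A n))
    (hdisj : Pairwise (Function.onFun Disjoint A)) (hcover : (⋃ n, A n) = Set.univ)
    (hpos : ∀ n, 0 < P (A n)) :
    ∃ (U : Set (Ω →ₘ[P] ℝ)) (X : Ω →ₘ[P] ℝ),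
      IsL0Convex P U ∧ IsL0Absorbent P U ∧ IsL0Balanced P U ∧
      IsGLB (gaugeSet P U X) 0 ∧ (0 : Ω →ₘ[P] ℝ) < 1 ∧ X ∉ U := by
  classical
  set U : Set (Ω →ₘ[P] ℝ) := Uset P A hA 1 with hUdef
  set X : Ω →ₘ[P] ℝ := mkc P hA hdisj hcover (fun n => (n : ℝ)) with hXdef
  have hcoeX := coeFn_mkc P hA hdisj hcover (fun n => (n : ℝ))
  have hcoeInd : ∀ i, (ind P (A i) (hA i) : Ω → ℝ) =ᵐ[P]
      fun ω => if idxOf hcover ω = i then 1 else 0 := by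
    intro i
    filter_upwards [AEEqFun.coeFn_mk ((A i).indicator fun _ => (1:ℝ))
      (aestronglyMeasurable_const.indicator (hA i))] with ω h1
    rw [ind, h1, ind_eval hdisj hcover]
  refine ⟨U, X, ?_, ?_, ?_, ?_, ?_, ?_⟩
  · -- convex
    rintro X₁ ⟨I₁, h₁⟩ X₂ ⟨I₂, h₂⟩ Y hY0 hY1
    refine ⟨I₁ ∪ I₂, fun i hi => ?_⟩
    rw [smul_eq_mul, smul_eq_mul, abs_mul_le_one_iff]
    have e₁ := (abs_mul_le_one_iff _ _).mp (h₁ i (fun h => hi (Finset.mem_union_left _ h)))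
    have e₂ := (abs_mul_le_one_iff _ _).mp (h₂ i (fun h => hi (Finset.mem_union_right _ h)))
    rw [le_iff_ae] at hY0 hY1
    filter_upwards [e₁, e₂, hY0, hY1,
      AEEqFun.coeFn_add (Y * X₁) ((1 - Y) * X₂), AEEqFun.coeFn_mul Y X₁,
      AEEqFun.coeFn_mul (1 - Y) X₂, AEEqFun.coeFn_sub 1 Y,
      AEEqFun.coeFn_zero (β := ℝ) (μ := P), AEEqFun.coeFn_one (β := ℝ) (μ := P)]
      with ω he₁ he₂ hy0 hy1 hadd hm1 hm2 hsub hz ho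
    simp only [Pi.add_apply, Pi.mul_apply, Pi.sub_apply, Pi.zero_apply, Pi.one_apply] at *
    rw [hz] at hy0; rw [ho] at hy1
    rw [hadd, hm1, hm2, hsub, ho]
    set g := (ind P (A i) (hA i) : Ω → ℝ) ω
    have e : (Y ω * X₁ ω + (1 - Y ω) * X₂ ω) * g
        = Y ω * (X₁ ω * g) + (1 - Y ω) * (X₂ ω * g) := by ring
    rw [e]
    calc |Y ω * (X₁ ω * g) + (1 - Y ω) * (X₂ ω * g)|
        ≤ |Y ω * (X₁ ω * g)| + |(1 - Y ω) * (X₂ ω * g)| := abs_add_le _ _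
      _ = Y ω * |X₁ ω * g| + (1 - Y ω) * |X₂ ω * g| := by
          rw [abs_mul (Y ω), abs_mul (1 - Y ω), abs_of_nonneg hy0,
            abs_of_nonneg (by linarith : (0:ℝ) ≤ 1 - Y ω)]
      _ ≤ Y ω * 1 + (1 - Y ω) * 1 := by
          exact add_le_add (mul_le_mul_of_nonneg_left he₁ hy0)
            (mul_le_mul_of_nonneg_left he₂ (by linarith))
      _ = 1 := by ring
  · -- absorbent
    intro W
    have habs : AEMeasurable (fun ω => |W ω|) P :=
      measurable_abs.comp_aemeasurable W.aemeasurable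
    have hmW : MeasureTheory.AEStronglyMeasurable (fun ω => (|W ω| + 1)⁻¹) P :=
      ((habs.add aemeasurable_const).inv).aestronglyMeasurable
    set Y : Ω →ₘ[P] ℝ := AEEqFun.mk (fun ω => |W ω| + 1)
      ((habs.add aemeasurable_const).aestronglyMeasurable) with hYdef
    set Z : Ω →ₘ[P] ℝ := AEEqFun.mk (fun ω => W ω * (|W ω| + 1)⁻¹)
      (W.aestronglyMeasurable.mul hmW) with hZdef
    have hcoeY : (Y : Ω → ℝ) =ᵐ[P] fun ω => |W ω| + 1 := AEEqFun.coeFn_mk _ _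
    have hcoeZ : (Z : Ω → ℝ) =ᵐ[P] fun ω => W ω * (|W ω| + 1)⁻¹ := AEEqFun.coeFn_mk _ _
    refine ⟨Y, ?_, ?_⟩
    · filter_upwards [hcoeY] with ω h1
      rw [h1]; positivity
    · refine Set.mem_smul_set.mpr ⟨Z, ⟨∅, fun i _ => ?_⟩, ?_⟩
      · rw [abs_mul_le_one_iff]
        filter_upwards [hcoeZ, hcoeInd i] with ω h1 h2
        rw [h1, h2]
        have hb : |W ω * (|W ω| + 1)⁻¹| ≤ 1 := by
          rw [abs_mul, abs_inv, abs_of_nonneg (by positivity : (0:ℝ) ≤ |W ω| + 1)]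
          rw [← div_eq_mul_inv, div_le_one (by positivity)]
          linarith [abs_nonneg (W ω)]
        by_cases hk : idxOf hcover ω = i
        · rw [if_pos hk, mul_one]; exact hb
        · rw [if_neg hk, mul_zero]; simp
      · rw [smul_eq_mul]
        apply AEEqFun.ext
        filter_upwards [AEEqFun.coeFn_mul Y Z, hcoeY, hcoeZ] with ω h1 h2 h3
        simp only [Pi.mul_apply] at h1
        rw [h1, h2, h3, mul_comm (W ω), ← mul_assoc,
          mul_inv_cancel₀ (by positivity : (|W ω| + 1) ≠ 0), one_mul]
  · -- balanced
    rintro W ⟨I, hI⟩ Y hY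
    refine ⟨I, fun i hi => ?_⟩
    rw [smul_eq_mul, abs_mul_le_one_iff]
    rw [abs_le_one_iff] at hY
    have e := (abs_mul_le_one_iff _ _).mp (hI i hi)
    filter_upwards [e, hY, AEEqFun.coeFn_mul Y W] with ω h1 h2 h3
    simp only [Pi.mul_apply] at h3
    rw [h3, mul_assoc, abs_mul]
    calc |Y ω| * |W ω * (ind P (A i) (hA i) : Ω → ℝ) ω| ≤ 1 * 1 :=
      mul_le_mul h2 h1 (abs_nonneg _) zero_le_one
      _ = 1 := by ring
  · -- IsGLB
    constructor
    · intro Y hY; exact hY.1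
    · intro Z hZ
      have hYmem : ∀ n : ℕ, (mkc P hA hdisj hcover
          (fun i => if i ≤ n then 1/((n:ℝ)+1) else (i:ℝ))) ∈ gaugeSet P U X := by
        intro n
        set Yn := mkc P hA hdisj hcover (fun i => if i ≤ n then 1/((n:ℝ)+1) else (i:ℝ))
        set Zn := mkc P hA hdisj hcover (fun i => if i ≤ n then ((n:ℝ)+1)*(i:ℝ) else 1)
        have hcoeYn := coeFn_mkc P hA hdisj hcover (fun i => if i ≤ n then 1/((n:ℝ)+1) else (i:ℝ))
        have hcoeZn := coeFn_mkc P hA hdisj hcover (fun i => if i ≤ n then ((n:ℝ)+1)*(i:ℝ) else 1)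
        constructor
        · rw [le_iff_ae]
          filter_upwards [hcoeYn, AEEqFun.coeFn_zero (β := ℝ) (μ := P)] with ω h1 h2
          rw [h1, h2]
          simp only [Pi.zero_apply]
          split <;> positivity
        · refine Set.mem_smul_set.mpr ⟨Zn, ⟨Finset.range (n+1), fun i hi => ?_⟩, ?_⟩
          · have hni : n < i := by
              by_contra h
              exact hi (Finset.mem_range.mpr (by omega))
            rw [abs_mul_le_one_iff]
            filter_upwards [hcoeZn, hcoeInd i] with ω h1 h2
            rw [h1, h2]
            by_cases hk : idxOf hcover ω = i
            · rw [if_pos hk, if_neg (by omega : ¬ idxOf hcover ω ≤ n)]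
              norm_num
            · rw [if_neg hk, mul_zero]
              simp
          · rw [smul_eq_mul]
            apply AEEqFun.ext
            filter_upwards [AEEqFun.coeFn_mul Yn Zn, hcoeYn, hcoeZn, hcoeX]
              with ω h1 h2 h3 h4
            simp only [Pi.mul_apply] at h1
            rw [h1, h2, h3, h4]
            by_cases hk : idxOf hcover ω ≤ n
            · rw [if_pos hk, if_pos hk]
              have hne : ((n:ℝ)+1) ≠ 0 := by positivity
              field_simp
            · rw [if_neg hk, if_neg hk, mul_one]
      have hle : ∀ᵐ ω ∂P, ∀ n : ℕ, Z ω ≤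
          (if idxOf hcover ω ≤ n then 1/((n:ℝ)+1) else (idxOf hcover ω : ℝ)) := by
        rw [MeasureTheory.ae_all_iff]
        intro n
        have hh := AEEqFun.coeFn_le.mpr (hZ (hYmem n))
        filter_upwards [hh, coeFn_mkc P hA hdisj hcover
          (fun i => if i ≤ n then 1/((n:ℝ)+1) else (i:ℝ))] with ω h1 h2
        rw [h2] at h1
        exact h1
      rw [le_iff_ae]
      filter_upwards [hle, AEEqFun.coeFn_zero (β := ℝ) (μ := P)] with ω h1 h2
      rw [h2]
      simp only [Pi.zero_apply]
      apply ge_of_tendsto tendsto_one_div_add_atTop_nhds_zero_nat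
      rw [eventually_atTop]
      exact ⟨idxOf hcover ω, fun n hn => by
        have h1n := h1 n
        rwa [if_pos hn] at h1n⟩
  · -- 0 < 1
    refine lt_of_le_of_ne ?_ ?_
    · rw [le_iff_ae]
      filter_upwards [AEEqFun.coeFn_zero (β := ℝ) (μ := P),
        AEEqFun.coeFn_one (β := ℝ) (μ := P)] with ω h1 h2
      rw [h1, h2]
      simp
    · intro h
      have h0 := AEEqFun.coeFn_zero (β := ℝ) (μ := P)
      rw [h] at h0
      have h1 := AEEqFun.coeFn_one (β := ℝ) (μ := P)
      have hFalse : ∀ᵐ (_ : Ω) ∂P, False := by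
        filter_upwards [h0, h1] with ω e0 e1
        rw [e0] at e1
        simp only [Pi.zero_apply, Pi.one_apply] at e1
        norm_num at e1
      have h2 : P {ω | ¬ False} = 0 := MeasureTheory.ae_iff.mp hFalse
      simp only [not_false_iff, Set.setOf_true, MeasureTheory.measure_univ] at h2
      exact one_ne_zero h2
  · -- X ∉ U
    rintro ⟨I, hI⟩
    set i := I.sup id + 2 with hidef
    have hiI : i ∉ I := by
      intro h
      have hs := Finset.le_sup (f := id) h
      simp only [id] at hs
      omega
    have hle := (abs_mul_le_one_iff _ _).mp (hI i hiI)
    have hnm : ∀ᵐ ω ∂P, ω ∉ A i := by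
      filter_upwards [hle, hcoeX, hcoeInd i] with ω h1 h2 h3
      intro hmem
      have hk : idxOf hcover ω = i := idxOf_eq hdisj hcover hmem
      rw [h2, h3, hk, if_pos rfl, mul_one] at h1
      have h2le : (2:ℝ) ≤ (i:ℝ) := by
        have : 2 ≤ i := by omega
        exact_mod_cast this
      rw [abs_of_nonneg (by positivity)] at h1
      linarith
    exact absurd (MeasureTheory.measure_eq_zero_iff_ae_notMem.mpr hnm) (hpos i).ne'
end

section
/- There is no family 𝒫 of L⁰-seminorms on the L⁰-module L⁰ such that the family of seminorm balls {U_{Q,δ} := {X ∈ L⁰ : ‖X‖ ≤ δ a.e. for all ‖·‖ ∈ Q} : Q ⊆ 𝒫 finite, δ ∈ L⁰₊₊} and the family {U_ε : ε ∈ L⁰₊₊}, where U_ε := {Y ∈ L⁰ : ∃ finite I ⊆ ℕ such that |Y·1_{A_i}| ≤ ε a.e. for all i ∉ I}, are mutually refining (i.e., every U_ε contains some U_{Q,δ} and every U_{Q,δ} contains some U_ε). Hence the locally L⁰-convex topology on L⁰ generated by the neighborhood base {U_ε : ε ∈ L⁰₊₊} of 0 is not induced by any family of L⁰-seminorms. 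-/
open MeasureTheory Filter Pointwise

variable {Ω : Type*} [MeasurableSpace Ω] (P : MeasureTheory.Measure Ω ) [IsProbabilityMeasure P]

section Aux

variable {Ω : Type*} [MeasurableSpace Ω] {P : MeasureTheory.Measure Ω} [IsProbabilityMeasure P]

lemma ind_coeFn (A : Set Ω) (hA : MeasurableSet A) :
    (ind P A hA : Ω → ℝ) =ᵐ[P] A.indicator fun _ => 1 :=
  AEEqFun.coeFn_mk _ _

lemma exists_concat (A : ℕ → Set Ω) (hA : ∀ n, MeasurableSet (A n))
    (hdisj : Pairwise (Function.onFun Disjoint A)) (hcover : (⋃ n, A n) = Set.univ) :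
    ∃ X : Ω →ₘ[P] ℝ,
      (∀ n : ℕ, ∀ᵐ ω ∂P, ω ∈ A n → (X : Ω → ℝ) ω = n) ∧
      (∀ n : ℕ, ind P (A n) (hA n) * X =
        AEEqFun.mk (fun _ : Ω => (n : ℝ)) aestronglyMeasurable_const * ind P (A n) (hA n)) := by
  classical
  have hex : ∀ ω : Ω, ∃ n, ω ∈ A n := fun ω =>
    Set.mem_iUnion.mp (hcover ▸ Set.mem_univ ω)
  set g : Ω → ℕ := fun ω => Nat.find (hex ω) with hgdef
  have hg : ∀ ω, ω ∈ A (g ω) := fun ω => Nat.find_spec (hex ω)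
  have hgval : ∀ {ω n}, ω ∈ A n → g ω = n := by
    intro ω n hω
    by_contra hne
    exact Set.disjoint_left.mp (hdisj hne) (hg ω) hω
  have hgm : Measurable g := measurable_to_countable' fun n => by
    have he : g ⁻¹' {n} = A n := by
      ext ω
      simp only [Set.mem_preimage, Set.mem_singleton_iff]
      exact ⟨fun h => h ▸ hg ω, fun h => hgval h⟩
    rw [he]; exact hA n
  have hfm : Measurable fun ω => (g ω : ℝ) :=
    (measurable_from_top (f := fun n : ℕ => (n : ℝ))).comp hgm
  refine ⟨AEEqFun.mk _ hfm.aestronglyMeasurable, ?_, ?_⟩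
  · intro n
    filter_upwards [AEEqFun.coeFn_mk (fun ω => (g ω : ℝ)) hfm.aestronglyMeasurable]
      with ω h hmem
    rw [h, hgval hmem]
  · intro n
    apply AEEqFun.ext
    filter_upwards [AEEqFun.coeFn_mul (ind P (A n) (hA n))
        (AEEqFun.mk _ hfm.aestronglyMeasurable),
      AEEqFun.coeFn_mul (AEEqFun.mk (fun _ : Ω => (n : ℝ)) aestronglyMeasurable_const)
        (ind P (A n) (hA n)),
      ind_coeFn (A n) (hA n),
      AEEqFun.coeFn_mk (fun ω => (g ω : ℝ)) hfm.aestronglyMeasurable,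
      AEEqFun.coeFn_mk (fun _ : Ω => (n : ℝ)) aestronglyMeasurable_const]
      with ω h1 h2 h3 h4 h5
    simp only [Pi.mul_apply] at h1 h2
    rw [h1, h2, h3, h4, h5]
    by_cases hω : ω ∈ A n
    · simp [Set.indicator_of_mem hω, hgval hω]
    · simp [Set.indicator_of_notMem hω]

end Aux

/-- no family of `L⁰`-seminorms on `L⁰` has its balls mutually refining
with the family `{U_ε : ε ∈ L⁰₊₊}`; hence the locally `L⁰`-convex topology generated by
the neighborhood base `{U_ε}` of `0` is not induced by any family of `L⁰`-seminorms. -/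
theorem stmt_16 {Ω : Type*} [MeasurableSpace Ω] (P : MeasureTheory.Measure Ω)
    [IsProbabilityMeasure P]
    (A : ℕ → Set Ω) (hA : ∀ n, MeasurableSet (A n))
    (hdisj : Pairwise (Function.onFun Disjoint A)) (hcover : (⋃ n, A n) = Set.univ)
    (hpos : ∀ n, 0 < P (A n)) :
    ¬ ∃ Ps : Set ((Ω →ₘ[P] ℝ) → (Ω →ₘ[P] ℝ)),
      (∀ p ∈ Ps, IsL0Seminorm P p) ∧
      (∀ ε : Ω →ₘ[P] ℝ, L0pp P ε →
        ∃ (Q : Finset ((Ω →ₘ[P] ℝ) → (Ω →ₘ[P] ℝ))) (δ : Ω →ₘ[P] ℝ),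
          (Q : Set ((Ω →ₘ[P] ℝ) → (Ω →ₘ[P] ℝ))) ⊆ Ps ∧ L0pp P δ ∧
          {X : Ω →ₘ[P] ℝ | ∀ p ∈ Q, p X ≤ δ} ⊆ Uset P A hA ε) ∧
      (∀ (Q : Finset ((Ω →ₘ[P] ℝ) → (Ω →ₘ[P] ℝ))) (δ : Ω →ₘ[P] ℝ),
        (Q : Set ((Ω →ₘ[P] ℝ) → (Ω →ₘ[P] ℝ))) ⊆ Ps → L0pp P δ →
        ∃ ε : Ω →ₘ[P] ℝ, L0pp P ε ∧
          Uset P A hA ε ⊆ {X : Ω →ₘ[P] ℝ | ∀ p ∈ Q, p X ≤ δ}) := by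
  rintro ⟨Ps, hsem, h1, h2⟩
  -- step 0: 1 is a.e. positive
  have h1pos : L0pp P (1 : Ω →ₘ[P] ℝ) := by
    filter_upwards [AEEqFun.coeFn_one (β := ℝ) (μ := P)] with ω hω
    rw [hω]; norm_num
  obtain ⟨Q, δ, hQPs, hδ, hball⟩ := h1 1 h1pos
  obtain ⟨ε, hε, hsub⟩ := h2 Q δ hQPs hδ
  -- disjoint indicators multiply to zero
  have hindmul : ∀ {n i : ℕ}, n ≠ i →
      ind P (A n) (hA n) * ind P (A i) (hA i) = 0 := by
    intro n i hni
    apply AEEqFun.ext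
    filter_upwards [AEEqFun.coeFn_mul (ind P (A n) (hA n)) (ind P (A i) (hA i)),
      ind_coeFn (A n) (hA n), ind_coeFn (A i) (hA i),
      AEEqFun.coeFn_zero (β := ℝ) (μ := P)] with ω hm hn' hi' h0
    simp only [Pi.mul_apply] at hm
    rw [hm, hn', hi', h0, Pi.zero_apply]
    by_cases hω : ω ∈ A n
    · have : ω ∉ A i := Set.disjoint_left.mp (hdisj hni) hω
      simp [Set.indicator_of_notMem this]
    · simp [Set.indicator_of_notMem hω]
  -- every c * 1_{A n} lies in the ball
  have hmem : ∀ (c : Ω →ₘ[P] ℝ) (n : ℕ), ∀ p ∈ Q, p (c * ind P (A n) (hA n)) ≤ δ := by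
    intro c n
    apply hsub
    refine ⟨{n}, fun i hi => ?_⟩
    have hni : n ≠ i := fun h => hi (by simp [h])
    have hz : c * ind P (A n) (hA n) * ind P (A i) (hA i) = 0 := by
      rw [mul_assoc, hindmul hni, mul_zero]
    rw [hz]
    rw [← AEEqFun.coeFn_le]
    filter_upwards [AEEqFun.coeFn_abs (0 : Ω →ₘ[P] ℝ),
      AEEqFun.coeFn_zero (β := ℝ) (μ := P), hε] with ω ha hz' hεω
    rw [ha, hz', Pi.zero_apply, abs_zero]
    exact le_of_lt hεω
  -- the concatenated element X with X = n on A n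
  obtain ⟨X, hXval, hXmul⟩ := exists_concat (P := P) A hA hdisj hcover
  -- |ind| = ind
  have habs_ind : ∀ n, |ind P (A n) (hA n)| = ind P (A n) (hA n) := by
    intro n
    apply AEEqFun.ext
    filter_upwards [AEEqFun.coeFn_abs (ind P (A n) (hA n)), ind_coeFn (A n) (hA n)]
      with ω ha hi
    rw [ha, hi]
    exact abs_of_nonneg (Set.indicator_nonneg (fun _ _ => zero_le_one) ω)
  -- X lies in the ball
  have hXball : X ∈ {X : Ω →ₘ[P] ℝ | ∀ p ∈ Q, p X ≤ δ} := by
    intro p hp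
    obtain ⟨hp0, hphom, hptri⟩ := hsem p (hQPs hp)
    have hn : ∀ n : ℕ, ind P (A n) (hA n) * p X ≤ δ := by
      intro n
      have hsm : ind P (A n) (hA n) • X = ind P (A n) (hA n) * X := rfl
      have h1' : p (ind P (A n) (hA n) • X) = ind P (A n) (hA n) * p X := by
        rw [hphom, habs_ind]
      rw [← h1', hsm, hXmul n]
      exact hmem _ n p hp
    have hco : ∀ n : ℕ, ∀ᵐ ω ∂P,
        (A n).indicator (fun _ => (1 : ℝ)) ω * (p X : Ω → ℝ) ω ≤ (δ : Ω → ℝ) ω := by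
      intro n
      have hle := AEEqFun.coeFn_le.mpr (hn n)
      filter_upwards [hle, AEEqFun.coeFn_mul (ind P (A n) (hA n)) (p X),
        ind_coeFn (A n) (hA n)] with ω h1' hm hi
      simp only [Pi.mul_apply] at hm
      rw [← hi, ← hm]
      exact h1'
    rw [← AEEqFun.coeFn_le]
    have hexx : ∀ ω : Ω, ∃ n, ω ∈ A n := fun ω =>
      Set.mem_iUnion.mp (hcover ▸ Set.mem_univ ω)
    filter_upwards [MeasureTheory.ae_all_iff.mpr hco] with ω hω
    obtain ⟨n, hn'⟩ := hexx ω
    have := hω n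
    rwa [Set.indicator_of_mem hn', one_mul] at this
  -- hence X ∈ U_1
  obtain ⟨I, hI⟩ := hball hXball
  -- pick i ∉ I with i ≥ 2
  set i : ℕ := I.sup id + 2 with hidef
  have hiI : i ∉ I := by
    intro h
    have := Finset.le_sup (f := id) h
    simp only [id] at this
    omega
  have hle := hI i hiI
  -- derive: a.e. ω ∉ A i
  have hc : ∀ᵐ ω ∂P, ω ∈ A i → False := by
    filter_upwards [AEEqFun.coeFn_le.mpr hle,
      AEEqFun.coeFn_abs (X * ind P (A i) (hA i)),
      AEEqFun.coeFn_mul X (ind P (A i) (hA i)),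
      ind_coeFn (A i) (hA i), hXval i,
      AEEqFun.coeFn_one (β := ℝ) (μ := P)] with ω h1' h2' h3' h4' h5' h6' hmem'
    simp only [Pi.mul_apply] at h3'
    rw [h2', h3', h4', h6', Pi.one_apply, Set.indicator_of_mem hmem', mul_one,
      h5' hmem'] at h1'
    have hi1 : ((i : ℝ)) ≤ 1 := by
      rwa [abs_of_nonneg (by positivity)] at h1'
    have h2le : (2 : ℝ) ≤ (i : ℝ) := by exact_mod_cast (by omega : 2 ≤ i)
    linarith
  have hnull : P (A i) = 0 := by
    rw [ae_iff] at hc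
    refine measure_mono_null ?_ hc
    intro ω hω
    simp only [Set.mem_setOf_eq]
    intro h
    exact h hω
  exact absurd hnull (hpos i).ne'
end

section
/- Let ε, ε' ∈ L⁰₊₊ and let V ⊆ L⁰ be any set with U_{ε'} ⊆ V ⊆ U_ε, where U_η := {Y ∈ L⁰ : ∃ finite I ⊆ ℕ such that |Y·1_{A_i}| ≤ η a.e. for all i ∉ I}. Then V is not closed under countable concatenations: the element ε+1 satisfies (ε+1)·1_{A_n} ∈ U_{ε'} ⊆ V for every n, so that 1_{A_n}·(ε+1) = 1_{A_n}·X_n with X_n := (ε+1)·1_{A_n} ∈ V, yet ε+1 ∉ U_ε ⊇ V. Consequently, any neighborhood base of 0 generating the same topology as {U_η : η ∈ L⁰₊₊} contains sets that are not closed under countable concatenations. -/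
open MeasureTheory Filter Pointwise

variable {Ω : Type*} [MeasurableSpace Ω] (P : MeasureTheory.Measure Ω ) [IsProbabilityMeasure P]

/-- any set `V` squeezed between two sets `U_{ε'} ⊆ V ⊆ U_ε` of the
counterexample basis is not closed under countable concatenations, witnessed by
`ε + 1`. -/
theorem stmt_17 {Ω : Type*} [MeasurableSpace Ω] (P : MeasureTheory.Measure Ω)
    [IsProbabilityMeasure P]
    (A : ℕ → Set Ω) (hA : ∀ n, MeasurableSet (A n))
    (hdisj : Pairwise (Function.onFun Disjoint A)) (hcover : (⋃ n, A n) = Set.univ)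
    (hpos : ∀ n, 0 < P (A n))
    (ε ε' : Ω →ₘ[P] ℝ) (hε : L0pp P ε) (hε' : L0pp P ε')
    (V : Set (Ω →ₘ[P] ℝ)) (hV₁ : Uset P A hA ε' ⊆ V) (hV₂ : V ⊆ Uset P A hA ε) :
    (∀ n, (ε + 1) * ind P (A n) (hA n) ∈ Uset P A hA ε') ∧
    (∀ n, ind P (A n) (hA n) * (ε + 1) =
      ind P (A n) (hA n) * ((ε + 1) * ind P (A n) (hA n))) ∧
    (ε + 1) ∉ Uset P A hA ε ∧
    ¬ IsConcatClosed P V := by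
  classical
  -- basic coe facts
  have hindcoe : ∀ n, (ind P (A n) (hA n) : Ω →ₘ[P] ℝ) =ᵐ[P]
      (A n).indicator (fun _ => (1:ℝ)) := fun n => AEEqFun.coeFn_mk _ _
  have hεnn : (0 : Ω →ₘ[P] ℝ) ≤ ε' := by
    rw [← AEEqFun.coeFn_le]
    filter_upwards [hε', AEEqFun.coeFn_zero (β := ℝ) (μ := P)] with ω h1 h2
    rw [h2]; exact le_of_lt h1
  have key1 : ∀ n, (ε + 1) * ind P (A n) (hA n) ∈ Uset P A hA ε' := by
    intro n
    refine ⟨{n}, fun i hi => ?_⟩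
    have hne : i ≠ n := by simpa using hi
    have hd : Disjoint (A n) (A i) := hdisj (Ne.symm hne)
    have hz : (ε + 1) * ind P (A n) (hA n) * ind P (A i) (hA i) = 0 := by
        apply AEEqFun.ext
        filter_upwards [AEEqFun.coeFn_mul ((ε + 1) * ind P (A n) (hA n)) (ind P (A i) (hA i)),
          AEEqFun.coeFn_mul (ε + 1) (ind P (A n) (hA n)), hindcoe n, hindcoe i,
          AEEqFun.coeFn_zero (β := ℝ) (μ := P)] with ω h1 h2 h3 h4 h5
        simp only [Pi.mul_apply, Pi.zero_apply] at *
        rw [h1, h2, h3, h4, h5]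
        by_cases hω : ω ∈ A n
        · have : ω ∉ A i := fun h => (Set.disjoint_left.mp hd hω) h
          simp [Set.indicator_of_notMem this]
        · simp [Set.indicator_of_notMem hω]
    rw [hz, ← AEEqFun.coeFn_le]
    filter_upwards [AEEqFun.coeFn_abs (0 : Ω →ₘ[P] ℝ),
      AEEqFun.coeFn_zero (β := ℝ) (μ := P), hε'] with ω h1 h2 h3
    rw [h1, h2]; simp only [Pi.zero_apply, abs_zero]; exact le_of_lt h3
  have key2 : ∀ n, ind P (A n) (hA n) * (ε + 1) =
      ind P (A n) (hA n) * ((ε + 1) * ind P (A n) (hA n)) := by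
    intro n
    apply AEEqFun.ext
    filter_upwards [AEEqFun.coeFn_mul (ind P (A n) (hA n)) (ε + 1),
      AEEqFun.coeFn_mul (ind P (A n) (hA n)) ((ε + 1) * ind P (A n) (hA n)),
      AEEqFun.coeFn_mul (ε + 1) (ind P (A n) (hA n)), hindcoe n] with ω h1 h2 h3 h4
    simp only [Pi.mul_apply] at *
    rw [h1, h2, h3, h4]
    by_cases hω : ω ∈ A n
    · simp [Set.indicator_of_mem hω]
    · simp [Set.indicator_of_notMem hω]
  have key3 : (ε + 1) ∉ Uset P A hA ε := by
    rintro ⟨I, hI⟩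
    obtain ⟨i, hi⟩ := Infinite.exists_notMem_finset I
    have hle := hI i hi
    rw [← AEEqFun.coeFn_le] at hle
    have hae : ∀ᵐ ω ∂P, ω ∉ A i := by
      filter_upwards [hle, AEEqFun.coeFn_abs ((ε + 1) * ind P (A i) (hA i)),
        AEEqFun.coeFn_mul (ε + 1) (ind P (A i) (hA i)),
        AEEqFun.coeFn_add ε (1 : Ω →ₘ[P] ℝ), AEEqFun.coeFn_one (β := ℝ) (μ := P),
        hindcoe i, hε] with ω h1 h2 h3 h4 h5 h6 h7 hmem
      rw [h2] at h1
      simp only [Pi.mul_apply, Pi.add_apply, Pi.one_apply] at *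
      rw [h3, h4, h5, h6, Set.indicator_of_mem hmem, mul_one,
        abs_of_pos (by linarith)] at h1
      linarith
    have : P (A i) = 0 := by
      have hsub : A i ⊆ {ω | ¬ (ω ∉ A i)} := fun ω hω h => h hω
      exact measure_mono_null hsub hae
    exact absurd this (hpos i).ne'
  refine ⟨key1, key2, key3, ?_⟩
  intro hcc
  have : (ε + 1) ∈ V := by
    apply hcc A hA hdisj hcover
    intro n
    exact ⟨(ε + 1) * ind P (A n) (hA n), hV₁ (key1 n), by
      rw [smul_eq_mul, smul_eq_mul]; exact key2 n⟩
  exact key3 (hV₂ this)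
end
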